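/- arXiv:1106.0456 — 4 statements merged into one kernel-verified Lean document; each statement's English description precedes it below -/
import Mathlib

section
/- Let b(x) = (1 - 2ⁿ)·χ_{|x|≤1}(x) + χ_{1<|x|≤2}(x) on ℝⁿ. Then ℋ(b)(x) = 1 - 2ⁿ for |x| ≤ 1, ℋ(b)(x) = 1 - 2ⁿ|x|^{-n} for 1 < |x| ≤ 2, and ℋ(b)(x) = 0 for |x| > 2. -/
open MeasureTheory Metric Set

/-- Volume of the ball of radius `r` in `ℝⁿ`. -/
noncomputable def ballVol (n : ℕ) (r : ℝ) : ℝ :=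
  (volume (ball (0 : EuclideanSpace ℝ (Fin n)) r)).toReal

/-- The `n`-dimensional Hardy operator
`ℋf(x) = (1/(vₙ |x|ⁿ)) ∫_{|y| < |x|} f(y) dy`. -/
noncomputable def hardyOp (n : ℕ) (f : EuclideanSpace ℝ (Fin n) → ℝ)
    (x : EuclideanSpace ℝ (Fin n)) : ℝ :=
  (ballVol n 1 * ‖x‖ ^ n)⁻¹ * ∫ y in ball (0 : EuclideanSpace ℝ (Fin n)) ‖x‖, f y

/-- `b(x) = (1 - 2ⁿ)·χ_{|x|≤1}(x) + χ_{1<|x|≤2}(x)`. -/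
noncomputable def bFun (n : ℕ) (x : EuclideanSpace ℝ (Fin n)) : ℝ :=
  if ‖x‖ ≤ 1 then 1 - 2 ^ n else if ‖x‖ ≤ 2 then 1 else 0

/-- Explicit computation of `ℋ(b)`: `ℋ(b)(x) = 1 - 2ⁿ` for `|x| ≤ 1`,
`ℋ(b)(x) = 1 - 2ⁿ|x|⁻ⁿ` for `1 < |x| ≤ 2`, and `ℋ(b)(x) = 0` for `|x| > 2`. -/
theorem hardy_of_bFun (n : ℕ) (hn : 0 < n) (x : EuclideanSpace ℝ (Fin n)) (hx : x ≠ 0) :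
    (‖x‖ ≤ 1 → hardyOp n (bFun n) x = 1 - 2 ^ n) ∧
    (1 < ‖x‖ → ‖x‖ ≤ 2 → hardyOp n (bFun n) x = 1 - 2 ^ n / ‖x‖ ^ n) ∧
    (2 < ‖x‖ → hardyOp n (bFun n) x = 0) := by
  haveI : Nontrivial (EuclideanSpace ℝ (Fin n)) := by
    apply Module.nontrivial_of_finrank_pos (R := ℝ); simpa using hn
  have hR : 0 < ‖x‖ := norm_pos_iff.mpr hx
  have hvpos : 0 < ballVol n 1 := by
    rw [ballVol]
    exact ENNReal.toReal_pos (measure_ball_pos volume _ one_pos).ne' measure_ball_lt_top.ne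
  have hvr : ∀ r : ℝ, 0 ≤ r → (volume (ball (0 : EuclideanSpace ℝ (Fin n)) r)).toReal
      = r ^ n * ballVol n 1 := fun r hr => by
    rw [Measure.addHaar_ball _ _ hr, finrank_euclideanSpace_fin, ENNReal.toReal_mul,
      ENNReal.toReal_ofReal (by positivity)]; rfl
  have hvrc : ∀ r : ℝ, 0 ≤ r → (volume (closedBall (0 : EuclideanSpace ℝ (Fin n)) r)).toReal
      = r ^ n * ballVol n 1 := fun r hr => by
    rw [Measure.addHaar_closedBall _ _ hr, finrank_euclideanSpace_fin, ENNReal.toReal_mul,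
      ENNReal.toReal_ofReal (by positivity)]; rfl
  have hint : ∀ r : ℝ, IntegrableOn
      ((closedBall (0 : EuclideanSpace ℝ (Fin n)) r).indicator (fun _ => (1:ℝ)))
      (ball (0 : EuclideanSpace ℝ (Fin n)) ‖x‖) volume := fun r => by
    apply Integrable.integrableOn
    rw [integrable_indicator_iff measurableSet_closedBall]
    exact integrableOn_const measure_closedBall_lt_top.ne
  have hI : ∀ r : ℝ, (∫ y in ball (0 : EuclideanSpace ℝ (Fin n)) ‖x‖,
        (closedBall (0 : EuclideanSpace ℝ (Fin n)) r).indicator (fun _ => (1:ℝ)) y)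
      = (volume (closedBall (0 : EuclideanSpace ℝ (Fin n)) r
          ∩ ball (0 : EuclideanSpace ℝ (Fin n)) ‖x‖)).toReal := fun r => by
    rw [setIntegral_indicator measurableSet_closedBall, setIntegral_const, smul_eq_mul, mul_one,
      inter_comm]; rfl
  have key : (∫ y in ball (0 : EuclideanSpace ℝ (Fin n)) ‖x‖, bFun n y)
      = (-(2:ℝ) ^ n) * (volume (closedBall (0 : EuclideanSpace ℝ (Fin n)) 1
            ∩ ball (0 : EuclideanSpace ℝ (Fin n)) ‖x‖)).toReal
        + (volume (closedBall (0 : EuclideanSpace ℝ (Fin n)) 2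
            ∩ ball (0 : EuclideanSpace ℝ (Fin n)) ‖x‖)).toReal := by
    have hb : ∀ y : EuclideanSpace ℝ (Fin n), bFun n y
        = (-(2:ℝ) ^ n) * (closedBall (0 : EuclideanSpace ℝ (Fin n)) 1).indicator
            (fun _ => (1:ℝ)) y
          + (closedBall (0 : EuclideanSpace ℝ (Fin n)) 2).indicator (fun _ => (1:ℝ)) y := by
      intro y
      by_cases h1 : ‖y‖ ≤ 1
      · have h2 : ‖y‖ ≤ 2 := le_trans h1 one_le_two
        simp only [bFun, indicator, mem_closedBall, dist_zero_right, if_pos h1, if_pos h2]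
        ring
      · by_cases h2 : ‖y‖ ≤ 2 <;>
          simp only [bFun, indicator, mem_closedBall, dist_zero_right, if_neg h1] <;>
          simp [h2]
    rw [setIntegral_congr_fun measurableSet_ball (fun y _ => hb y),
      integral_add ((hint 1).const_mul _) (hint 2),
      integral_const_mul, hI 1, hI 2]
  have hRn : (0:ℝ) < ‖x‖ ^ n := by positivity
  have hne : ballVol n 1 * ‖x‖ ^ n ≠ 0 := by positivity
  refine ⟨fun h1 => ?_, fun h1 h2 => ?_, fun h2 => ?_⟩
  · have i1 : closedBall (0 : EuclideanSpace ℝ (Fin n)) 1 ∩ ball 0 ‖x‖ = ball 0 ‖x‖ :=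
      inter_eq_self_of_subset_right (fun y hy => by
        simp only [mem_ball, mem_closedBall, dist_zero_right] at hy ⊢; linarith)
    have i2 : closedBall (0 : EuclideanSpace ℝ (Fin n)) 2 ∩ ball 0 ‖x‖ = ball 0 ‖x‖ :=
      inter_eq_self_of_subset_right (fun y hy => by
        simp only [mem_ball, mem_closedBall, dist_zero_right] at hy ⊢; linarith)
    rw [hardyOp, key, i1, i2, hvr ‖x‖ hR.le, inv_mul_eq_div, div_eq_iff hne]
    ring
  · have i1 : closedBall (0 : EuclideanSpace ℝ (Fin n)) 1 ∩ ball 0 ‖x‖ = closedBall 0 1 :=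
      inter_eq_self_of_subset_left (fun y hy => by
        simp only [mem_ball, mem_closedBall, dist_zero_right] at hy ⊢; linarith)
    have i2 : closedBall (0 : EuclideanSpace ℝ (Fin n)) 2 ∩ ball 0 ‖x‖ = ball 0 ‖x‖ :=
      inter_eq_self_of_subset_right (fun y hy => by
        simp only [mem_ball, mem_closedBall, dist_zero_right] at hy ⊢; linarith)
    rw [hardyOp, key, i1, i2, hvr ‖x‖ hR.le, hvrc 1 zero_le_one, one_pow, one_mul,
      inv_mul_eq_div, div_eq_iff hne]
    field_simp
    ring
  · have i1 : closedBall (0 : EuclideanSpace ℝ (Fin n)) 1 ∩ ball 0 ‖x‖ = closedBall 0 1 :=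
      inter_eq_self_of_subset_left (fun y hy => by
        simp only [mem_ball, mem_closedBall, dist_zero_right] at hy ⊢; linarith)
    have i2 : closedBall (0 : EuclideanSpace ℝ (Fin n)) 2 ∩ ball 0 ‖x‖ = closedBall 0 2 :=
      inter_eq_self_of_subset_left (fun y hy => by
        simp only [mem_ball, mem_closedBall, dist_zero_right] at hy ⊢; linarith)
    rw [hardyOp, key, i1, i2, hvrc 1 zero_le_one, hvrc 2 zero_le_two, one_pow, one_mul]
    ring
end

section
/- Let b(x) = (1 - 2ⁿ)·χ_{|x|≤1}(x) + χ_{1<|x|≤2}(x) on ℝⁿ. Then ∫_{ℝⁿ} ℋ(b)(x) dx = -n·2ⁿ·log 2 · v_n ≠ 0; in particular ℋ(b) does not have vanishing integral, so ℋ(b) ∉ H¹(ℝⁿ) even though b is (a multiple of) an H¹ atom. -/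
open MeasureTheory Metric

section aux
variable (n : ℕ)

lemma euclid_nontrivial (hn : 0 < n) : Nontrivial (EuclideanSpace ℝ (Fin n)) :=
  Module.nontrivial_of_finrank_pos (R := ℝ) (by rw [finrank_euclideanSpace_fin]; exact hn)

lemma ballVol_pos : 0 < ballVol n 1 :=
  ENNReal.toReal_pos (measure_ball_pos volume _ one_pos).ne' (measure_ball_lt_top).ne

lemma vol_inter (hn : 0 < n) {r R : ℝ} (hr : 0 ≤ r) (hR : 0 ≤ R) :
    (volume (ball (0 : EuclideanSpace ℝ (Fin n)) r ∩ closedBall 0 R)).toReal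
      = ballVol n 1 * (min r R) ^ n := by
  haveI := euclid_nontrivial n hn
  rcases le_or_gt r R with h | h
  · rw [Set.inter_eq_left.2 (ball_subset_closedBall.trans (closedBall_subset_closedBall h)),
      Measure.addHaar_ball _ _ hr, finrank_euclideanSpace_fin, min_eq_left h,
      ENNReal.toReal_mul, ENNReal.toReal_ofReal (pow_nonneg hr n)]
    simp [ballVol, mul_comm]
  · rw [Set.inter_eq_right.2 (closedBall_subset_ball h),
      Measure.addHaar_closedBall _ _ hR, finrank_euclideanSpace_fin, min_eq_right h.le,
      ENNReal.toReal_mul, ENNReal.toReal_ofReal (pow_nonneg hR n)]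
    simp [ballVol, mul_comm]

lemma bFun_eq (y : EuclideanSpace ℝ (Fin n)) :
    bFun n y = (closedBall (0 : EuclideanSpace ℝ (Fin n)) 2).indicator (fun _ => (1:ℝ)) y
      - 2 ^ n * (closedBall (0 : EuclideanSpace ℝ (Fin n)) 1).indicator (fun _ => (1:ℝ)) y := by
  simp only [bFun, Set.indicator, mem_closedBall, dist_zero_right]
  split_ifs with h1 h2
  · ring
  · exact absurd (h1.trans one_le_two) h2
  · ring
  · ring

end aux

section aux2
variable (n : ℕ)

lemma integral_ball_bFun (hn : 0 < n) {r : ℝ} (hr : 0 ≤ r) :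
    ∫ y in ball (0 : EuclideanSpace ℝ (Fin n)) r, bFun n y
      = ballVol n 1 * ((min r 2) ^ n - 2 ^ n * (min r 1) ^ n) := by
  have hc : IntegrableOn (fun _ : EuclideanSpace ℝ (Fin n) => (1:ℝ)) (ball 0 r) volume :=
    integrableOn_const measure_ball_lt_top.ne
  have h2 : IntegrableOn ((closedBall (0 : EuclideanSpace ℝ (Fin n)) 2).indicator
      (fun _ => (1:ℝ))) (ball 0 r) volume := hc.indicator measurableSet_closedBall
  have h1 : IntegrableOn ((closedBall (0 : EuclideanSpace ℝ (Fin n)) 1).indicator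
      (fun _ => (1:ℝ))) (ball 0 r) volume := hc.indicator measurableSet_closedBall
  simp only [bFun_eq]
  rw [integral_sub h2 ((h1.const_mul _ : _)), integral_const_mul,
    setIntegral_indicator measurableSet_closedBall,
    setIntegral_indicator measurableSet_closedBall, setIntegral_const, setIntegral_const,
    smul_eq_mul, mul_one, smul_eq_mul, mul_one, Measure.real, Measure.real,
    vol_inter n hn hr (by norm_num : (0:ℝ) ≤ 2), vol_inter n hn hr (by norm_num : (0:ℝ) ≤ 1)]
  ring

noncomputable def gFun (n : ℕ) (r : ℝ) : ℝ :=
  (r ^ n)⁻¹ * ((min r 2) ^ n - 2 ^ n * (min r 1) ^ n)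

lemma hardy_eq (hn : 0 < n) (x : EuclideanSpace ℝ (Fin n)) :
    hardyOp n (bFun n) x = gFun n ‖x‖ := by
  have hv : ballVol n 1 ≠ 0 := (ballVol_pos n).ne'
  rw [hardyOp, integral_ball_bFun n hn (norm_nonneg x), mul_inv, gFun]
  calc (ballVol n 1)⁻¹ * (‖x‖ ^ n)⁻¹ *
        (ballVol n 1 * ((min ‖x‖ 2) ^ n - 2 ^ n * (min ‖x‖ 1) ^ n))
      = ((ballVol n 1)⁻¹ * ballVol n 1) *
        ((‖x‖ ^ n)⁻¹ * ((min ‖x‖ 2) ^ n - 2 ^ n * (min ‖x‖ 1) ^ n)) := by ring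
    _ = (‖x‖ ^ n)⁻¹ * ((min ‖x‖ 2) ^ n - 2 ^ n * (min ‖x‖ 1) ^ n) := by
        rw [inv_mul_cancel₀ hv, one_mul]

lemma key_integral (hn : 0 < n) :
    ∫ y in Set.Ioi (0:ℝ), y ^ (n - 1) • gFun n y = -(2 ^ n * Real.log 2) := by
  have hncast : ((n - 1 : ℕ) : ℝ) + 1 = (n : ℝ) := by
    exact_mod_cast congrArg (fun k : ℕ => (k : ℝ)) (Nat.sub_add_cancel hn)
  have hnR : (0:ℝ) < n := by exact_mod_cast hn
  set f : ℝ → ℝ := fun y => y ^ (n - 1) • gFun n y with hf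
  have eq1 : Set.EqOn f (fun y => y ^ (n-1) * (1 - 2 ^ n)) (Set.Ioc (0:ℝ) 1) := by
    intro y hy
    have hy0 : y ≠ 0 := hy.1.ne'
    have hm2 : min y 2 = y := min_eq_left (hy.2.trans one_le_two)
    have hm1 : min y 1 = y := min_eq_left hy.2
    simp only [hf, gFun, hm1, hm2, smul_eq_mul]
    field_simp
  have eq2 : Set.EqOn f (fun y => y ^ (n-1) - 2 ^ n * y⁻¹) (Set.Ioc (1:ℝ) 2) := by
    intro y hy
    have hy0 : y ≠ 0 := (zero_lt_one.trans hy.1).ne'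
    have hm2 : min y 2 = y := min_eq_left hy.2
    have hm1 : min y 1 = 1 := min_eq_right hy.1.le
    have hyn : y ^ n = y ^ (n - 1) * y := by rw [← pow_succ, Nat.sub_add_cancel hn]
    simp only [hf, gFun, hm1, hm2, smul_eq_mul, one_pow]
    field_simp
    rw [hyn]; ring
  have eq3 : Set.EqOn f (fun _ => 0) (Set.Ioi (2:ℝ)) := by
    intro y hy
    have hm2 : min y 2 = 2 := min_eq_right (le_of_lt hy)
    have hm1 : min y 1 = 1 := min_eq_right (one_le_two.trans (le_of_lt hy))
    simp [hf, gFun, hm1, hm2]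
  have i1 : IntegrableOn f (Set.Ioc (0:ℝ) 1) volume := by
    refine IntegrableOn.congr_fun ?_ eq1.symm measurableSet_Ioc
    exact (Continuous.integrableOn_Ioc (by continuity))
  have i2 : IntegrableOn f (Set.Ioc (1:ℝ) 2) volume := by
    refine IntegrableOn.congr_fun ?_ eq2.symm measurableSet_Ioc
    refine ((ContinuousOn.integrableOn_compact isCompact_Icc ?_).mono_set Set.Ioc_subset_Icc_self)
    refine ((continuous_pow _).continuousOn.sub (continuousOn_const.mul ?_))
    exact continuousOn_inv₀.mono (fun y hy => by
      simp only [Set.mem_compl_iff, Set.mem_singleton_iff]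
      exact (zero_lt_one.trans_le hy.1).ne')
  have i3 : IntegrableOn f (Set.Ioi (2:ℝ)) volume := by
    refine IntegrableOn.congr_fun ?_ eq3.symm measurableSet_Ioi
    exact integrableOn_zero
  have c1 : ∫ y in Set.Ioc (0:ℝ) 1, f y = (1 - 2 ^ n) / n := by
    rw [setIntegral_congr_fun measurableSet_Ioc eq1,
      ← intervalIntegral.integral_of_le zero_le_one, intervalIntegral.integral_mul_const,
      integral_pow, hncast]
    norm_num
    ring
  have c2 : ∫ y in Set.Ioc (1:ℝ) 2, f y = (2 ^ n - 1) / n - 2 ^ n * Real.log 2 := by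
    rw [setIntegral_congr_fun measurableSet_Ioc eq2,
      ← intervalIntegral.integral_of_le one_le_two]
    have hii : IntervalIntegrable (fun y : ℝ => y⁻¹) volume 1 2 :=
      intervalIntegral.intervalIntegrable_inv (f := id) (fun x hx => by
        rw [Set.uIcc_of_le one_le_two] at hx
        exact (zero_lt_one.trans_le hx.1).ne') (by fun_prop)
    rw [intervalIntegral.integral_sub (intervalIntegral.intervalIntegrable_pow _) (hii.const_mul _),
      intervalIntegral.integral_const_mul, integral_pow, integral_inv (by
        rw [Set.uIcc_of_le one_le_two]
        intro h; exact absurd h.1 (by norm_num)), hncast]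
    rw [Nat.sub_add_cancel hn]
    norm_num
  have c3 : ∫ y in Set.Ioi (2:ℝ), f y = 0 := by
    rw [setIntegral_congr_fun measurableSet_Ioi eq3]; simp
  have split2 : ∫ y in Set.Ioi (1:ℝ), f y
      = (∫ y in Set.Ioc (1:ℝ) 2, f y) + ∫ y in Set.Ioi (2:ℝ), f y := by
    rw [← Set.Ioc_union_Ioi_eq_Ioi one_le_two,
      setIntegral_union (Set.Ioc_disjoint_Ioi le_rfl) measurableSet_Ioi i2 i3]
  have split1 : ∫ y in Set.Ioi (0:ℝ), f y
      = (∫ y in Set.Ioc (0:ℝ) 1, f y) + ∫ y in Set.Ioi (1:ℝ), f y := by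
    rw [← Set.Ioc_union_Ioi_eq_Ioi zero_le_one,
      setIntegral_union (Set.Ioc_disjoint_Ioi le_rfl) measurableSet_Ioi i1
        ((i2.union i3).mono_set (by rw [Set.Ioc_union_Ioi_eq_Ioi one_le_two]))]
  rw [split1, split2, c1, c2, c3]
  field_simp
  ring

end aux2


/-- `∫_{ℝⁿ} ℋ(b) = -n·2ⁿ·log 2·vₙ ≠ 0`: `ℋ(b)` does not have vanishing integral
(so `ℋ(b) ∉ H¹(ℝⁿ)`), even though `b` is (a multiple of) an `H¹` atom. -/
theorem integral_hardy_bFun_ne_zero (n : ℕ) (hn : 0 < n) :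
    (∫ x, hardyOp n (bFun n) x) = -(n : ℝ) * 2 ^ n * Real.log 2 * ballVol n 1 ∧
    (∫ x, hardyOp n (bFun n) x) ≠ 0 := by

  haveI := euclid_nontrivial n hn
  have heq : (∫ x, hardyOp n (bFun n) x)
      = -(n : ℝ) * 2 ^ n * Real.log 2 * ballVol n 1 := by
    simp only [hardy_eq n hn]
    rw [MeasureTheory.integral_fun_norm_addHaar volume (gFun n)]
    rw [finrank_euclideanSpace_fin, key_integral n hn]
    simp only [nsmul_eq_mul, smul_eq_mul]
    unfold ballVol
    simp only [Measure.real]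
    ring
  refine ⟨heq, ?_⟩
  rw [heq]
  have hpos : 0 < (n : ℝ) * 2 ^ n * Real.log 2 * ballVol n 1 := by
    have := ballVol_pos n
    have := Real.log_pos one_lt_two
    have : (0:ℝ) < n := by exact_mod_cast hn
    positivity
  simp only [neg_mul]
  exact neg_ne_zero.2 hpos.ne'
end

section
/- For any function ã on ℝⁿ with supp ã ⊂ B(0,r), ‖ã‖_∞ ≤ |B(0,r)|^{-1}, and ∫ ã = 0 (a centered (1,∞,0)-atom), one has ∫_{ℝⁿ} |ℋ(ã)(x)| dx ≤ 2ⁿ. -/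
open MeasureTheory Metric

/-- A `(1,∞,0)`-atom: supported in `B(x₀,r)`, bounded by `|B(x₀,r)|⁻¹`,
with vanishing integral. -/
def IsAtomInfZero (n : ℕ) (x₀ : EuclideanSpace ℝ (Fin n)) (r : ℝ)
    (a : EuclideanSpace ℝ (Fin n) → ℝ) : Prop :=
  Measurable a ∧ (∀ x, x ∉ ball x₀ r → a x = 0) ∧
    (∀ x, |a x| ≤ ((volume (ball x₀ r)).toReal)⁻¹) ∧ (∫ x, a x) = 0

/-- For a centered `(1,∞,0)`-atom `ã` supported in `B(0,r)`,
`∫_{ℝⁿ} |ℋ(ã)(x)| dx ≤ 2ⁿ`. -/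
theorem hardy_atom_L1_bound (n : ℕ) (hn : 0 < n) (r : ℝ) (hr : 0 < r)
    (a : EuclideanSpace ℝ (Fin n) → ℝ) (ha : IsAtomInfZero n 0 r a) :
    (∫ x, |hardyOp n a x|) ≤ 2 ^ n := by
  obtain ⟨hmeas, hsupp, hbdd, hint⟩ := ha
  haveI : Nonempty (Fin n) := Fin.pos_iff_nonempty.mp hn
  set V : ℝ := (volume (ball (0 : EuclideanSpace ℝ (Fin n)) r)).toReal with hV
  have hVpos : 0 < V :=
    ENNReal.toReal_pos (measure_ball_pos volume 0 hr).ne' measure_ball_lt_top.ne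
  -- volume of ball of radius ‖x‖ in terms of ballVol
  have hball : ∀ x : EuclideanSpace ℝ (Fin n),
      (volume (ball (0 : EuclideanSpace ℝ (Fin n)) ‖x‖)).toReal = ballVol n 1 * ‖x‖ ^ n := by
    intro x
    rw [Measure.addHaar_ball volume 0 (norm_nonneg x), ENNReal.toReal_mul,
      ENNReal.toReal_ofReal (by positivity)]
    simp [ballVol, finrank_euclideanSpace_fin, mul_comm]
  -- pointwise bound
  have hpt : ∀ x : EuclideanSpace ℝ (Fin n),
      |hardyOp n a x| ≤ (ball (0 : EuclideanSpace ℝ (Fin n)) r).indicator (fun _ => V⁻¹) x := by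
    intro x
    by_cases hx : x ∈ ball (0 : EuclideanSpace ℝ (Fin n)) r
    · rw [Set.indicator_of_mem hx]
      have hc : (0:ℝ) ≤ ballVol n 1 * ‖x‖ ^ n := by
        have : (0:ℝ) ≤ ballVol n 1 := ENNReal.toReal_nonneg
        positivity
      have hbound : |∫ y in ball (0 : EuclideanSpace ℝ (Fin n)) ‖x‖, a y|
          ≤ V⁻¹ * (ballVol n 1 * ‖x‖ ^ n) := by
        rw [← hball x, ← Real.norm_eq_abs]
        exact norm_setIntegral_le_of_norm_le_const measure_ball_lt_top
          (fun y _ => by simpa [Real.norm_eq_abs] using hbdd y)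
      calc |hardyOp n a x|
          = (ballVol n 1 * ‖x‖ ^ n)⁻¹ * |∫ y in ball (0 : EuclideanSpace ℝ (Fin n)) ‖x‖, a y| := by
            rw [hardyOp, abs_mul, abs_of_nonneg (inv_nonneg.mpr hc)]
        _ ≤ (ballVol n 1 * ‖x‖ ^ n)⁻¹ * (V⁻¹ * (ballVol n 1 * ‖x‖ ^ n)) := by
            exact mul_le_mul_of_nonneg_left hbound (inv_nonneg.mpr hc)
        _ = V⁻¹ * ((ballVol n 1 * ‖x‖ ^ n)⁻¹ * (ballVol n 1 * ‖x‖ ^ n)) := by ring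
        _ ≤ V⁻¹ * 1 := by
            apply mul_le_mul_of_nonneg_left _ (inv_nonneg.mpr hVpos.le)
            rcases eq_or_ne (ballVol n 1 * ‖x‖ ^ n) 0 with h | h
            · simp [h]
            · rw [inv_mul_cancel₀ h]
        _ = V⁻¹ := mul_one _
    · rw [Set.indicator_of_notMem hx]
      have hxr : r ≤ ‖x‖ := by
        simpa [mem_ball, dist_eq_norm] using hx
      have : (∫ y in ball (0 : EuclideanSpace ℝ (Fin n)) ‖x‖, a y) = ∫ y, a y := by
        apply setIntegral_eq_integral_of_forall_compl_eq_zero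
        intro y hy
        apply hsupp
        intro hy'
        exact hy (mem_ball.mpr (lt_of_lt_of_le (by simpa [mem_ball] using hy') hxr))
      rw [hardyOp, this, hint, mul_zero, abs_zero]
  -- integrate the bound
  have hg : Integrable ((ball (0 : EuclideanSpace ℝ (Fin n)) r).indicator (fun _ => V⁻¹)) := by
    rw [integrable_indicator_iff measurableSet_ball]
    exact integrableOn_const measure_ball_lt_top.ne
  calc (∫ x, |hardyOp n a x|)
      ≤ ∫ x, (ball (0 : EuclideanSpace ℝ (Fin n)) r).indicator (fun _ => V⁻¹) x :=
        integral_mono_of_nonneg (Filter.Eventually.of_forall fun x => abs_nonneg _) hg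
          (Filter.Eventually.of_forall hpt)
    _ = V⁻¹ * V := by
        rw [integral_indicator_const _ measurableSet_ball]
        simp [hV, mul_comm, measureReal_def]
    _ = 1 := inv_mul_cancel₀ hVpos.ne'
    _ ≤ 2 ^ n := one_le_pow₀ (by norm_num)
end

section
/- Let b ∈ BMO(ℝⁿ) and let ã be a centered (1,∞,0)-atom supported in B(0,r). Then ∫_{B(0,r)} |b(x) - b_{B(0,r)}| |ℋ(ã)(x)| dx ≤ C‖b‖_{BMO} with C depending only on n. -/
open MeasureTheory Metric

/-- For `b ∈ BMO(ℝⁿ)` (with BMO bound `M`) and a centered `(1,∞,0)`-atom `ã`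
supported in `B(0,r)`,
`∫_{B(0,r)} |b(x) - b_{B(0,r)}| |ℋ(ã)(x)| dx ≤ C·M ≤ C‖b‖_{BMO}` with `C = C(n)`. -/
theorem bmo_times_hardy_atom_bound (n : ℕ) (hn : 0 < n) :
    ∃ C : ℝ, 0 < C ∧ ∀ (b : EuclideanSpace ℝ (Fin n) → ℝ),
      LocallyIntegrable b volume → ∀ M : ℝ,
      (∀ (c : EuclideanSpace ℝ (Fin n)) (ρ : ℝ), 0 < ρ →
        (⨍ y in ball c ρ, |b y - ⨍ z in ball c ρ, b z|) ≤ M) →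
      ∀ (r : ℝ), 0 < r → ∀ (a : EuclideanSpace ℝ (Fin n) → ℝ),
        IsAtomInfZero n 0 r a →
        (∫ x in ball (0 : EuclideanSpace ℝ (Fin n)) r,
            |b x - ⨍ z in ball (0 : EuclideanSpace ℝ (Fin n)) r, b z| *
              |hardyOp n a x|) ≤ C * M := by
  haveI : Nonempty (Fin n) := Fin.pos_iff_nonempty.mp hn
  refine ⟨1, one_pos, ?_⟩
  intro b hb M hM r hr a ha
  obtain ⟨ham, hsupp, hbound, -⟩ := ha
  set B : Set (EuclideanSpace ℝ (Fin n)) := ball 0 r with hB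
  set V : ℝ := (volume B).toReal with hVdef
  have hVfin : volume B < ⊤ := measure_ball_lt_top
  have hV0 : 0 < V :=
    ENNReal.toReal_pos (measure_ball_pos volume 0 hr).ne' hVfin.ne
  have hv1 : 0 < ballVol n 1 :=
    ENNReal.toReal_pos (measure_ball_pos volume 0 one_pos).ne'
      measure_ball_lt_top.ne
  -- pointwise bound on the Hardy operator of the atom
  have hpt : ∀ x : EuclideanSpace ℝ (Fin n), |hardyOp n a x| ≤ V⁻¹ := by
    intro x
    rcases eq_or_lt_of_le (norm_nonneg x) with h0 | h0
    · have : hardyOp n a x = 0 := by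
        simp [hardyOp, ← h0, zero_pow hn.ne']
      rw [this, abs_zero]
      positivity
    · have hvol : (volume (ball (0 : EuclideanSpace ℝ (Fin n)) ‖x‖)).toReal
          = ‖x‖ ^ n * ballVol n 1 := by
        rw [Measure.addHaar_ball volume 0 h0.le, finrank_euclideanSpace_fin,
          ENNReal.toReal_mul, ENNReal.toReal_ofReal (by positivity)]
        rfl
      have hInt : |∫ y in ball (0 : EuclideanSpace ℝ (Fin n)) ‖x‖, a y|
          ≤ V⁻¹ * (volume (ball (0 : EuclideanSpace ℝ (Fin n)) ‖x‖)).toReal := by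
        refine norm_setIntegral_le_of_norm_le_const (f := a) (measure_ball_lt_top (μ := (volume : Measure (EuclideanSpace ℝ (Fin n)))) (x := 0) (r := ‖x‖))
          (fun y _ => ?_)
        simpa [Real.norm_eq_abs] using hbound y
      rw [hardyOp, abs_mul, abs_inv, abs_of_pos (by positivity : (0:ℝ) < ballVol n 1 * ‖x‖ ^ n)]
      calc (ballVol n 1 * ‖x‖ ^ n)⁻¹ *
            |∫ y in ball (0 : EuclideanSpace ℝ (Fin n)) ‖x‖, a y|
          ≤ (ballVol n 1 * ‖x‖ ^ n)⁻¹ * (V⁻¹ * (‖x‖ ^ n * ballVol n 1)) := by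
            gcongr
            rw [← hvol]; exact hInt
        _ = V⁻¹ := by field_simp
  set c : ℝ := ⨍ z in B, b z with hc
  have hbint : IntegrableOn (fun x => |b x - c|) B volume := by
    have h1 : IntegrableOn b B volume :=
      (hb.integrableOn_isCompact (isCompact_closedBall 0 r)).mono_set
        ball_subset_closedBall
    exact (h1.sub (integrableOn_const hVfin.ne)).abs
  have h1 : (∫ x in B, |b x - c| * |hardyOp n a x|)
      ≤ ∫ x in B, |b x - c| * V⁻¹ := by
    refine integral_mono_of_nonneg ?_ (hbint.mul_const _) ?_
    · filter_upwards with x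
      positivity
    · filter_upwards with x
      exact mul_le_mul_of_nonneg_left (hpt x) (abs_nonneg _)
  have h2 : (∫ x in B, |b x - c| * V⁻¹) = ⨍ x in B, |b x - c| := by
    rw [integral_mul_const, setAverage_eq, smul_eq_mul, mul_comm]
    rfl
  calc (∫ x in B, |b x - c| * |hardyOp n a x|)
      ≤ ∫ x in B, |b x - c| * V⁻¹ := h1
    _ = ⨍ x in B, |b x - c| := h2
    _ ≤ M := hM 0 r hr
    _ = 1 * M := (one_mul M).symm
end
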